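/- With notation as before, define d_1 : (Q ⊕ K_{NL}) ⊕ (Q ⊕ K_{NR}) ⊕ P → Q by d_1(x_L + k_{NL}, x_R + k_{NR}, a) = x_L + x_R + s(a). Then d_1 is surjective, and Ker(d_1) = Im(d_0) where d_0 is the map of the previous statement; that is, the three-term complex is exact at the middle term. -/
import Mathlib


/-- Exactness in the middle and surjectivity of `d_1 : E_1^{1,·} → E_1^{2,·}` for the
spectral sequence of `𝔐₂(X₂)`: with `d_1(x_L + k_{NL}, x_R + k_{NR}, a) = x_L + x_R + s(a)`,
`d_1` is surjective and `ker d_1 = im d_0`. -/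
theorem stmt13 (KAL KNL KAR KNR KC : Type)
    [AddCommGroup KAL] [AddCommGroup KNL] [AddCommGroup KAR] [AddCommGroup KNR]
    [AddCommGroup KC]
    (s : MvPolynomial (Fin 2) ℤ →+ MvPolynomial (Fin 2) ℤ) (hs : Function.Injective s)
    (sL : KAL →+ KNL) (sR : KAR →+ KNR) :
    let P := MvPolynomial (Fin 2) ℤ
    let Q := MvPolynomial (Fin 2) ℤ
    let d0 : (P × KAL) × (P × KAR) × (Q × KNL × KNR × KC) →
        (Q × KNL) × (Q × KNR) × P := fun v =>
      ((-s v.1.1 + v.2.2.1, -sL v.1.2 + v.2.2.2.1),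
       (-s v.2.1.1 - v.2.2.1, -sR v.2.1.2 - v.2.2.2.2.1),
       v.1.1 + v.2.1.1)
    let d1 : (Q × KNL) × (Q × KNR) × P → Q := fun v => v.1.1 + v.2.1.1 + s v.2.2
    Function.Surjective d1 ∧ {v | d1 v = 0} = Set.range d0 := by
  intro P Q d0 d1
  constructor
  · intro q
    exact ⟨((q, 0), (0, 0), 0), by simp [d1]⟩
  · ext v
    simp only [Set.mem_setOf_eq, Set.mem_range, d0, d1]
    constructor
    · intro h
      refine ⟨((v.2.2, 0), (0, 0), (v.1.1 + s v.2.2, v.1.2, -v.2.1.2, 0)), ?_⟩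
      have hx : -s 0 - (v.1.1 + s v.2.2) = v.2.1.1 := by
        simp only [map_zero]; linear_combination -h
      refine Prod.ext (Prod.ext ?_ ?_) (Prod.ext (Prod.ext hx ?_) ?_) <;> simp
    · rintro ⟨w, rfl⟩
      simp only [map_add]
      ring
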